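/- Let f ∈ L¹(ℝ²;ℝ) ∩ L^p(ℝ²;ℝ) for some p > 1. Then for every x ∈ ℝ² the integral defining Φ[f](x) converges absolutely, and lim_{|x| → ∞} Φ[f](x)/log|x| = ∫_{ℝ²} f. -/

import Mathlib

open MeasureTheory Filter
open scoped ENNReal

/-- The superpotential Φ[f](x) = ∫ (log|x−y| − log(|y|+1)) f(y) dy. -/
noncomputable def Phi (f : ℂ → ℝ) (x : ℂ) : ℝ :=
  ∫ y : ℂ, (Real.log ‖x - y‖ - Real.log (‖y‖ + 1)) * f y

section Stmt15Aux

open Metric Set MeasureTheory.Measure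

/-- positive part of `-log ‖x - y‖`. -/
noncomputable def stmt15hk (x y : ℂ) : ℝ := max 0 (-Real.log ‖x - y‖)

/-- regularized kernel. -/
noncomputable def stmt15G (x y : ℂ) : ℝ :=
  Real.log ‖x - y‖ - Real.log (‖y‖ + 1) + stmt15hk x y

lemma stmt15_neg_log_le_rpow {r a : ℝ} (hr : 0 ≤ r) (ha : 0 < a) :
    max 0 (-Real.log r) ≤ a⁻¹ * r ^ (-a) := by
  rcases eq_or_lt_of_le hr with h0 | h0
  · simp [← h0, Real.zero_rpow (neg_ne_zero.2 ha.ne')]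
  · have h1 : -Real.log r = a⁻¹ * Real.log (r ^ (-a)) := by
      rw [Real.log_rpow h0]
      field_simp
    have hpos : 0 < r ^ (-a) := Real.rpow_pos_of_pos h0 _
    have h2 : Real.log (r ^ (-a)) ≤ r ^ (-a) :=
      le_trans (Real.log_le_sub_one_of_pos hpos) (by linarith)
    have h3 : -Real.log r ≤ a⁻¹ * r ^ (-a) := by
      rw [h1]
      exact mul_le_mul_of_nonneg_left h2 (inv_nonneg.2 ha.le)
    exact max_le (by positivity) h3

lemma stmt15_I0_lt_top : ∫⁻ y in ball (0:ℂ) 1, ENNReal.ofReal ‖y‖⁻¹ < ⊤ := by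
  set μ := volume.restrict (ball (0:ℂ) 1) with hμ
  have hmeas : AEMeasurable (fun y : ℂ => ‖y‖⁻¹) μ := measurable_norm.inv.aemeasurable
  have hnn : 0 ≤ᵐ[μ] fun y : ℂ => ‖y‖⁻¹ := Eventually.of_forall fun y => by positivity
  have heq : (∫⁻ y in ball (0:ℂ) 1, ENNReal.ofReal ‖y‖⁻¹)
      = ∫⁻ t in Ioi (0:ℝ), μ {a | t ≤ ‖a‖⁻¹} :=
    lintegral_eq_lintegral_meas_le μ hnn hmeas
  rw [heq]
  have hsplit : (∫⁻ t in Ioi (0:ℝ), μ {a | t ≤ ‖a‖⁻¹})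
      ≤ (∫⁻ t in Ioc (0:ℝ) 1, μ {a | t ≤ ‖a‖⁻¹}) + ∫⁻ t in Ioi (1:ℝ), μ {a | t ≤ ‖a‖⁻¹} :=
    le_trans (lintegral_mono_set Ioi_subset_Ioc_union_Ioi) (lintegral_union_le _ _ _)
  refine lt_of_le_of_lt hsplit (ENNReal.add_lt_top.2 ⟨?_, ?_⟩)
  · calc (∫⁻ _t in Ioc (0:ℝ) 1, μ {a | _t ≤ ‖a‖⁻¹})
        ≤ ∫⁻ _t in Ioc (0:ℝ) 1, μ univ :=
          lintegral_mono fun t => measure_mono (subset_univ _)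
      _ < ⊤ := by
          rw [setLIntegral_const]
          refine ENNReal.mul_lt_top ?_ ?_
          · rw [hμ, Measure.restrict_apply_univ]
            exact measure_ball_lt_top
          · rw [Real.volume_Ioc]
            exact ENNReal.ofReal_lt_top
  · have key : ∀ t ∈ Ioi (1:ℝ),
        μ {a | t ≤ ‖a‖⁻¹} ≤ (NNReal.pi : ℝ≥0∞) * ENNReal.ofReal (t ^ (-2:ℝ)) := by
      intro t ht
      have ht1 : (1:ℝ) < t := ht
      have ht0 : (0:ℝ) < t := lt_trans one_pos ht1
      have hsub : {a : ℂ | t ≤ ‖a‖⁻¹} ⊆ closedBall 0 t⁻¹ := by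
        intro a ha
        simp only [mem_setOf_eq] at ha
        have h' : (‖a‖⁻¹)⁻¹ ≤ t⁻¹ := inv_anti₀ ht0 ha
        rw [inv_inv] at h'
        rwa [mem_closedBall_zero_iff]
      have hrw : (t:ℝ) ^ (-2:ℝ) = t⁻¹ ^ 2 := by
        rw [show (-2:ℝ) = -((2:ℕ):ℝ) by norm_num, Real.rpow_neg ht0.le, Real.rpow_natCast,
          inv_pow]
      calc μ {a | t ≤ ‖a‖⁻¹} ≤ μ (closedBall 0 t⁻¹) := measure_mono hsub
        _ ≤ volume (closedBall (0:ℂ) t⁻¹) := by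
            rw [hμ, Measure.restrict_apply' measurableSet_ball]
            exact measure_mono inter_subset_left
        _ = ENNReal.ofReal t⁻¹ ^ 2 * (NNReal.pi : ℝ≥0∞) := Complex.volume_closedBall _ _
        _ = (NNReal.pi : ℝ≥0∞) * ENNReal.ofReal (t ^ (-2:ℝ)) := by
            rw [hrw, ENNReal.ofReal_pow (by positivity), mul_comm]
    calc (∫⁻ t in Ioi (1:ℝ), μ {a | t ≤ ‖a‖⁻¹})
        ≤ ∫⁻ t in Ioi (1:ℝ), (NNReal.pi : ℝ≥0∞) * ENNReal.ofReal (t ^ (-2:ℝ)) :=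
          setLIntegral_mono' measurableSet_Ioi key
      _ = (NNReal.pi : ℝ≥0∞) * ∫⁻ t in Ioi (1:ℝ), ENNReal.ofReal (t ^ (-2:ℝ)) :=
          lintegral_const_mul' _ _ ENNReal.coe_ne_top
      _ < ⊤ := ENNReal.mul_lt_top ENNReal.coe_lt_top
          ((integrableOn_Ioi_rpow_of_lt (by norm_num) one_pos).setLIntegral_lt_top)

lemma stmt15_translate (x : ℂ) :
    (∫⁻ y, (ball x 1).indicator (fun y => ENNReal.ofReal ‖x - y‖⁻¹) y)
      = ∫⁻ y in ball (0:ℂ) 1, ENNReal.ofReal ‖y‖⁻¹ := by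
  have hψ : Measurable fun z : ℂ => (ball (0:ℂ) 1).indicator
      (fun z => ENNReal.ofReal ‖z‖⁻¹) z :=
    (measurable_norm.inv.ennreal_ofReal).indicator measurableSet_ball
  have h1 : ∀ y : ℂ, (ball x 1).indicator (fun y => ENNReal.ofReal ‖x - y‖⁻¹) y
      = (ball (0:ℂ) 1).indicator (fun z => ENNReal.ofReal ‖z‖⁻¹) (x - y) := by
    intro y
    have hmem : y ∈ ball x 1 ↔ x - y ∈ ball (0:ℂ) 1 := by
      rw [mem_ball, mem_ball_zero_iff, dist_eq_norm, norm_sub_rev]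
    by_cases h : y ∈ ball x 1
    · rw [Set.indicator_of_mem h, Set.indicator_of_mem (hmem.1 h)]
    · rw [Set.indicator_of_notMem h, Set.indicator_of_notMem (fun hc => h (hmem.2 hc))]
  simp_rw [h1]
  rw [(measurePreserving_sub_left volume x).lintegral_comp hψ,
    lintegral_indicator measurableSet_ball]

lemma stmt15_exists_r (f : ℂ → ℝ) (p : ℝ≥0∞) (hp : 1 < p)
    (hf1 : Integrable f) (hfp : MemLp f p volume) :
    ∃ r : ℝ, 1 < r ∧ (∫⁻ y, (‖f y‖₊ : ℝ≥0∞) ^ r) < ⊤ := by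
  by_cases hpt : p = ⊤
  · refine ⟨2, one_lt_two, ?_⟩
    have hb : ∀ᵐ y, (‖f y‖₊ : ℝ≥0∞) ≤ eLpNormEssSup f volume := ae_le_eLpNormEssSup
    have hfin : eLpNormEssSup f volume ≠ ⊤ := by
      have h2 := hfp.2
      rw [hpt, eLpNorm_exponent_top] at h2
      exact h2.ne
    calc (∫⁻ y, (‖f y‖₊ : ℝ≥0∞) ^ (2:ℝ))
        ≤ ∫⁻ y, eLpNormEssSup f volume * (‖f y‖₊ : ℝ≥0∞) := by
          refine lintegral_mono_ae (hb.mono fun y hy => ?_)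
          have h3 : ((‖f y‖₊ : ℝ≥0∞)) ^ (2:ℝ) = (‖f y‖₊ : ℝ≥0∞) * ‖f y‖₊ := by
            rw [show (2:ℝ) = ((2:ℕ):ℝ) by norm_num, ENNReal.rpow_natCast, sq]
          rw [h3]
          exact mul_le_mul_left hy _
      _ = eLpNormEssSup f volume * ∫⁻ y, (‖f y‖₊ : ℝ≥0∞) := lintegral_const_mul' _ _ hfin
      _ < ⊤ := ENNReal.mul_lt_top hfin.lt_top hf1.2
  · refine ⟨p.toReal, ?_, ?_⟩
    · rw [← ENNReal.toReal_one]
      exact (ENNReal.toReal_lt_toReal (by simp) hpt).2 hp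
    · exact lintegral_rpow_enorm_lt_top_of_eLpNorm_lt_top
        (zero_lt_one.trans hp).ne' hpt hfp.2

lemma stmt15_sing_bound (f : ℂ → ℝ) (hf1 : Integrable f) {r : ℝ} (hr : 1 < r)
    (hfr : (∫⁻ y, (‖f y‖₊ : ℝ≥0∞) ^ r) < ⊤) :
    ∃ C : ℝ≥0∞, C ≠ ⊤ ∧ ∀ x : ℂ,
      (∫⁻ y, ENNReal.ofReal (stmt15hk x y) * (‖f y‖₊ : ℝ≥0∞)) ≤ C := by
  set q := Real.conjExponent r with hqdef
  have hcj : r.HolderConjugate q := Real.HolderConjugate.conjExponent hr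
  have hq1 : 1 < q := hcj.symm.lt
  have hq0 : 0 < q := lt_trans one_pos hq1
  set B : ℝ≥0∞ := ENNReal.ofReal (q ^ q) * ∫⁻ y in ball (0:ℂ) 1, ENNReal.ofReal ‖y‖⁻¹ with hBdef
  have hBne : B ≠ ⊤ := ENNReal.mul_ne_top ENNReal.ofReal_ne_top stmt15_I0_lt_top.ne
  refine ⟨(∫⁻ y, (‖f y‖₊ : ℝ≥0∞) ^ r) ^ (1/r) * B ^ (1/q), ?_, ?_⟩
  · exact ENNReal.mul_ne_top
      (ENNReal.rpow_lt_top_of_nonneg (by positivity) hfr.ne).ne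
      (ENNReal.rpow_lt_top_of_nonneg (by positivity) hBne).ne
  · intro x
    have hHmeas : Measurable fun y : ℂ => ENNReal.ofReal (stmt15hk x y) := by
      unfold stmt15hk
      exact (measurable_const.max
        (Real.measurable_log.comp ((measurable_const.sub measurable_id).norm)).neg).ennreal_ofReal
    have hFmeas : AEMeasurable (fun y : ℂ => (‖f y‖₊ : ℝ≥0∞)) volume :=
      hf1.1.enorm
    have hholder := ENNReal.lintegral_mul_le_Lp_mul_Lq volume hcj hFmeas hHmeas.aemeasurable
    have hHq : (∫⁻ y, ENNReal.ofReal (stmt15hk x y) ^ q) ≤ B := by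
      have hpt : ∀ y : ℂ, ENNReal.ofReal (stmt15hk x y) ^ q
          ≤ ENNReal.ofReal (q ^ q) *
            (ball x 1).indicator (fun y => ENNReal.ofReal ‖x - y‖⁻¹) y := by
        intro y
        set s := ‖x - y‖ with hs
        have hs0 : 0 ≤ s := norm_nonneg _
        by_cases hsl : s < 1
        · rw [Set.indicator_of_mem (by rw [mem_ball, dist_eq_norm, norm_sub_rev]; exact hsl)]
          have hb1 : stmt15hk x y ≤ q * s ^ (-(q⁻¹)) := by
            have := stmt15_neg_log_le_rpow hs0 (inv_pos.2 hq0)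
            rwa [inv_inv] at this
          have hb2 : stmt15hk x y ^ q ≤ q ^ q * s⁻¹ := by
            calc stmt15hk x y ^ q ≤ (q * s ^ (-(q⁻¹))) ^ q :=
                Real.rpow_le_rpow (le_max_left _ _) hb1 hq0.le
              _ = q ^ q * (s ^ (-(q⁻¹))) ^ q :=
                Real.mul_rpow hq0.le (Real.rpow_nonneg hs0 _)
              _ = q ^ q * s ^ ((-(q⁻¹)) * q) := by rw [← Real.rpow_mul hs0]
              _ = q ^ q * s⁻¹ := by
                  rw [show (-(q⁻¹)) * q = -1 by field_simp, Real.rpow_neg_one]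
          calc ENNReal.ofReal (stmt15hk x y) ^ q = ENNReal.ofReal (stmt15hk x y ^ q) :=
              ENNReal.ofReal_rpow_of_nonneg (le_max_left _ _) hq0.le
            _ ≤ ENNReal.ofReal (q ^ q * s⁻¹) := ENNReal.ofReal_le_ofReal hb2
            _ = ENNReal.ofReal (q ^ q) * ENNReal.ofReal s⁻¹ :=
              ENNReal.ofReal_mul (by positivity)
        · push_neg at hsl
          rw [Set.indicator_of_notMem (by rw [mem_ball, dist_eq_norm, norm_sub_rev]; exact not_lt.2 hsl)]
          have h0 : stmt15hk x y = 0 :=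
            max_eq_left (neg_nonpos.2 (Real.log_nonneg hsl))
          rw [h0]
          simp [ENNReal.zero_rpow_of_pos hq0]
      calc (∫⁻ y, ENNReal.ofReal (stmt15hk x y) ^ q)
          ≤ ∫⁻ y, ENNReal.ofReal (q ^ q) *
              (ball x 1).indicator (fun y => ENNReal.ofReal ‖x - y‖⁻¹) y :=
            lintegral_mono hpt
        _ = ENNReal.ofReal (q ^ q) *
              ∫⁻ y, (ball x 1).indicator (fun y => ENNReal.ofReal ‖x - y‖⁻¹) y :=
            lintegral_const_mul' _ _ ENNReal.ofReal_ne_top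
        _ = B := by rw [stmt15_translate x]
    calc (∫⁻ y, ENNReal.ofReal (stmt15hk x y) * (‖f y‖₊ : ℝ≥0∞))
        = ∫⁻ y, ((fun y : ℂ => (‖f y‖₊ : ℝ≥0∞)) * fun y => ENNReal.ofReal (stmt15hk x y)) y := by
          simp only [Pi.mul_apply]
          exact lintegral_congr fun y => mul_comm _ _
      _ ≤ (∫⁻ y, (‖f y‖₊ : ℝ≥0∞) ^ r) ^ (1/r) *
            (∫⁻ y, ENNReal.ofReal (stmt15hk x y) ^ q) ^ (1/q) := hholder
      _ ≤ (∫⁻ y, (‖f y‖₊ : ℝ≥0∞) ^ r) ^ (1/r) * B ^ (1/q) := by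
          exact mul_le_mul_right (ENNReal.rpow_le_rpow hHq (by positivity)) _

lemma stmt15_Gbound (x y : ℂ) : |stmt15G x y| ≤ Real.log (‖x‖ + 2) := by
  unfold stmt15G stmt15hk
  set s := ‖x - y‖ with hs
  have hs0 : 0 ≤ s := norm_nonneg _
  have hy0 : (0:ℝ) < ‖y‖ + 1 := by positivity
  have hx2 : (0:ℝ) < ‖x‖ + 2 := by positivity
  have hyx : ‖y‖ ≤ s + ‖x‖ := by
    calc ‖y‖ = ‖x - (x - y)‖ := by congr 1; ring
      _ ≤ ‖x‖ + ‖x - y‖ := norm_sub_le _ _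
      _ = s + ‖x‖ := by rw [hs]; ring
  have hlogy : 0 ≤ Real.log (‖y‖ + 1) := Real.log_nonneg (by linarith [norm_nonneg y])
  by_cases h1 : 1 ≤ s
  · have hmax : max 0 (-Real.log s) = 0 := max_eq_left (neg_nonpos.2 (Real.log_nonneg h1))
    rw [hmax, add_zero, abs_le]
    constructor
    · have hyb : ‖y‖ + 1 ≤ (‖x‖ + 2) * s := by nlinarith [norm_nonneg x]
      have h2 := Real.log_le_log hy0 hyb
      rw [Real.log_mul hx2.ne' (by linarith : s ≠ 0)] at h2
      linarith
    · have hsb : s ≤ (‖x‖ + 2) * (‖y‖ + 1) := by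
        have h3 : s ≤ ‖x‖ + ‖y‖ := norm_sub_le x y
        nlinarith [norm_nonneg x, norm_nonneg y]
      have h2 := Real.log_le_log (by linarith : (0:ℝ) < s) hsb
      rw [Real.log_mul hx2.ne' hy0.ne'] at h2
      linarith
  · push_neg at h1
    have hlogs : Real.log s ≤ 0 := Real.log_nonpos hs0 h1.le
    have hmax : max 0 (-Real.log s) = -Real.log s := max_eq_right (by linarith)
    rw [hmax, show Real.log s - Real.log (‖y‖ + 1) + -Real.log s = -Real.log (‖y‖ + 1) by ring,
      abs_neg, abs_of_nonneg hlogy]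
    exact Real.log_le_log hy0 (by linarith)

lemma stmt15_nearfield {M : ℝ} (hM : 0 ≤ M) (x y : ℂ) (hy : ‖y‖ ≤ M)
    (hx : 2 * M + 2 ≤ ‖x‖) :
    |stmt15G x y - Real.log ‖x‖| ≤ Real.log 2 + Real.log (M + 1) := by
  unfold stmt15G stmt15hk
  set s := ‖x - y‖ with hs
  have hxpos : (0:ℝ) < ‖x‖ := by linarith
  have hsxy : ‖x‖ - ‖y‖ ≤ s := by
    have := abs_norm_sub_norm_le x y
    rw [← hs] at this
    cases' abs_le.1 this with h1 h2
    linarith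
  have hs1 : 1 ≤ s := by linarith
  have hmax : max 0 (-Real.log s) = 0 := max_eq_left (neg_nonpos.2 (Real.log_nonneg hs1))
  rw [hmax, add_zero]
  have h2 : |Real.log s - Real.log ‖x‖| ≤ Real.log 2 := by
    rw [abs_le]
    constructor
    · have hsx : ‖x‖ ≤ 2 * s := by linarith
      have h3 := Real.log_le_log hxpos hsx
      rw [Real.log_mul (by norm_num) (by linarith : s ≠ 0)] at h3
      linarith
    · have hsx2 : s ≤ 2 * ‖x‖ := by
        have h4 : s ≤ ‖x‖ + ‖y‖ := norm_sub_le x y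
        linarith
      have h3 := Real.log_le_log (by linarith : (0:ℝ) < s) hsx2
      rw [Real.log_mul (by norm_num) hxpos.ne'] at h3
      linarith
  have h3 : |Real.log (‖y‖ + 1)| ≤ Real.log (M + 1) := by
    rw [abs_of_nonneg (Real.log_nonneg (by linarith [norm_nonneg y]))]
    exact Real.log_le_log (by positivity) (by linarith)
  calc |Real.log s - Real.log (‖y‖ + 1) - Real.log ‖x‖|
      = |(Real.log s - Real.log ‖x‖) - Real.log (‖y‖ + 1)| := by ring_nf
    _ ≤ |Real.log s - Real.log ‖x‖| + |Real.log (‖y‖ + 1)| := abs_sub _ _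
    _ ≤ Real.log 2 + Real.log (M + 1) := add_le_add h2 h3

end Stmt15Aux

/-- "Newton's lemma": if f ∈ L¹ ∩ L^p(ℝ²;ℝ) for some p > 1, then the
integral defining Φ[f](x) converges absolutely for every x, and
Φ[f](x)/log|x| → ∫ f as |x| → ∞. -/
theorem stmt15 (f : ℂ → ℝ) (p : ℝ≥0∞) (hp : 1 < p)
    (hf1 : Integrable f) (hfp : MemLp f p volume) :
    (∀ x : ℂ,
      Integrable (fun y : ℂ => (Real.log ‖x - y‖ - Real.log (‖y‖ + 1)) * f y)) ∧
    Tendsto (fun x : ℂ => Phi f x / Real.log ‖x‖)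
      (Filter.comap (fun x : ℂ => ‖x‖) Filter.atTop) (nhds (∫ y : ℂ, f y)) := by
  classical
  open Metric Set MeasureTheory.Measure in
  obtain ⟨r, hr, hfr⟩ := stmt15_exists_r f p hp hf1 hfp
  obtain ⟨C, hCt, hC⟩ := stmt15_sing_bound f hf1 hr hfr
  have mK : ∀ x : ℂ, Measurable fun y : ℂ => Real.log ‖x - y‖ - Real.log (‖y‖ + 1) := by
    intro x
    exact (Real.measurable_log.comp ((measurable_const.sub measurable_id).norm)).sub
      (Real.measurable_log.comp (measurable_norm.add_const 1))
  have mh : ∀ x : ℂ, Measurable fun y : ℂ => stmt15hk x y := by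
    intro x
    unfold stmt15hk
    exact measurable_const.max
      (Real.measurable_log.comp ((measurable_const.sub measurable_id).norm)).neg
  have hint : ∀ x : ℂ, Integrable fun y : ℂ => stmt15hk x y * f y := by
    intro x
    refine ⟨(mh x).aestronglyMeasurable.mul hf1.1, ?_⟩
    have hfin : (∫⁻ y, (‖stmt15hk x y * f y‖₊ : ℝ≥0∞)) < ⊤ := by
      have heq : ∀ y : ℂ, (‖stmt15hk x y * f y‖₊ : ℝ≥0∞)
          = ENNReal.ofReal (stmt15hk x y) * (‖f y‖₊ : ℝ≥0∞) := by
        intro y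
        rw [nnnorm_mul, ENNReal.coe_mul,
          ← Real.enorm_eq_ofReal (r := stmt15hk x y) (le_max_left _ _)]
        rfl
      calc (∫⁻ y, (‖stmt15hk x y * f y‖₊ : ℝ≥0∞))
          = ∫⁻ y, ENNReal.ofReal (stmt15hk x y) * (‖f y‖₊ : ℝ≥0∞) :=
            lintegral_congr heq
        _ ≤ C := hC x
        _ < ⊤ := hCt.lt_top
    exact hfin
  have hGint : ∀ x : ℂ, Integrable fun y : ℂ => stmt15G x y * f y := by
    intro x
    refine hf1.bdd_mul (c := Real.log (‖x‖ + 2)) ?_ (Eventually.of_forall fun y => ?_)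
    · exact ((mK x).add (mh x)).aestronglyMeasurable
    · simpa [Real.norm_eq_abs] using stmt15_Gbound x y
  have hKint : ∀ x : ℂ,
      Integrable fun y : ℂ => (Real.log ‖x - y‖ - Real.log (‖y‖ + 1)) * f y := by
    intro x
    have hfe : (fun y : ℂ => (Real.log ‖x - y‖ - Real.log (‖y‖ + 1)) * f y)
        = fun y : ℂ => stmt15G x y * f y - stmt15hk x y * f y := by
      funext y
      unfold stmt15G
      ring
    rw [hfe]
    exact (hGint x).sub (hint x)
  refine ⟨hKint, ?_⟩
  have hPhi : ∀ x : ℂ, Phi f x = (∫ y, stmt15G x y * f y) - ∫ y, stmt15hk x y * f y := by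
    intro x
    unfold Phi
    have hfe : (fun y : ℂ => (Real.log ‖x - y‖ - Real.log (‖y‖ + 1)) * f y)
        = fun y : ℂ => stmt15G x y * f y - stmt15hk x y * f y := by
      funext y
      unfold stmt15G
      ring
    rw [hfe]
    exact integral_sub (hGint x) (hint x)
  rw [Metric.tendsto_nhds]
  intro ε hε
  set I := ∫ y : ℂ, f y with hI
  set N := ∫ y : ℂ, |f y| with hN
  have hN0 : 0 ≤ N := integral_nonneg fun y => abs_nonneg _
  have hC₀ : ∀ x : ℂ, |∫ y, stmt15hk x y * f y| ≤ C.toReal := by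
    intro x
    have h1 : |∫ y, stmt15hk x y * f y|
        ≤ (∫⁻ y, ENNReal.ofReal ‖stmt15hk x y * f y‖).toReal := by
      have := norm_integral_le_lintegral_norm (μ := volume) fun y : ℂ => stmt15hk x y * f y
      simpa [Real.norm_eq_abs] using this
    refine h1.trans (ENNReal.toReal_mono hCt ?_)
    calc (∫⁻ y, ENNReal.ofReal ‖stmt15hk x y * f y‖)
        = ∫⁻ y, ENNReal.ofReal (stmt15hk x y) * (‖f y‖₊ : ℝ≥0∞) := by
          refine lintegral_congr fun y => ?_
          rw [ofReal_norm, enorm_mul, Real.enorm_eq_ofReal (r := stmt15hk x y) (le_max_left _ _)]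
          rfl
      _ ≤ C := hC x
  set δ := ε / 6 with hδdef
  have hδ : 0 < δ := by positivity
  -- choose the cut-off radius M
  have htail : ∃ M : ℕ, ∫ y in (Metric.closedBall (0:ℂ) (M:ℝ))ᶜ, |f y| < δ := by
    have hmono : Monotone fun n : ℕ => Metric.closedBall (0:ℂ) (n:ℝ) := fun a b hab =>
      Metric.closedBall_subset_closedBall (by exact_mod_cast hab)
    have hunion : (⋃ n : ℕ, Metric.closedBall (0:ℂ) (n:ℝ)) = Set.univ := by
      ext y
      simp only [Set.mem_iUnion, Metric.mem_closedBall, dist_zero_right, Set.mem_univ,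
        iff_true]
      exact exists_nat_ge ‖y‖
    have htd := tendsto_setIntegral_of_monotone (fun n : ℕ => measurableSet_closedBall)
      hmono (f := fun y : ℂ => |f y|) (by rw [hunion]; exact hf1.abs.integrableOn)
    rw [hunion, setIntegral_univ, ← hN] at htd
    rw [Metric.tendsto_atTop] at htd
    obtain ⟨n, hn⟩ := htd δ hδ
    have hdist := hn n le_rfl
    rw [Real.dist_eq] at hdist
    refine ⟨n, ?_⟩
    have hsplit := integral_add_compl (measurableSet_closedBall
      (x := (0:ℂ)) (ε := (n:ℝ))) hf1.abs
    rw [← hN] at hsplit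
    cases' abs_lt.1 hdist with h1 h2
    linarith
  obtain ⟨M, hM⟩ := htail
  set Cm := Real.log 2 + Real.log ((M:ℝ) + 1) with hCm
  have hCm0 : 0 ≤ Cm :=
    add_nonneg (Real.log_nonneg one_le_two)
      (Real.log_nonneg (by have := Nat.cast_nonneg (α := ℝ) M; linarith))
  set D := Cm * N + C.toReal with hD
  have hD0 : 0 ≤ D := add_nonneg (mul_nonneg hCm0 hN0) ENNReal.toReal_nonneg
  set R := max (2 * (M:ℝ) + 2) (max 3 (Real.exp (3 * (D + 1) / ε))) with hR
  refine Filter.eventually_comap.2 ?_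
  filter_upwards [eventually_ge_atTop R] with b hb x hx
  rw [← hx] at hb
  -- hb : R ≤ ‖x‖
  have hxM : 2 * (M:ℝ) + 2 ≤ ‖x‖ := le_trans (le_max_left _ _) hb
  have hxR3 : (3:ℝ) ≤ ‖x‖ := le_trans (le_trans (le_max_left _ _) (le_max_right _ _)) hb
  have hxE : Real.exp (3 * (D + 1) / ε) ≤ ‖x‖ :=
    le_trans (le_trans (le_max_right _ _) (le_max_right _ _)) hb
  have hxpos : (0:ℝ) < ‖x‖ := by linarith
  set L := Real.log ‖x‖ with hL
  have hL1 : (1:ℝ) ≤ L := by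
    rw [hL, Real.le_log_iff_exp_le hxpos]
    have := Real.exp_one_lt_d9
    linarith
  have hLpos : (0:ℝ) < L := by linarith
  have hLD : 3 * (D + 1) / ε ≤ L := by
    rw [hL, Real.le_log_iff_exp_le hxpos]
    exact hxE
  have hg1int : Integrable fun y : ℂ => (stmt15G x y - L) * f y := by
    have hfe : (fun y : ℂ => (stmt15G x y - L) * f y)
        = fun y : ℂ => stmt15G x y * f y - L * f y := by
      funext y
      ring
    rw [hfe]
    exact (hGint x).sub (hf1.const_mul L)
  have hsum : (∫ y, stmt15G x y * f y) - L * I = ∫ y, (stmt15G x y - L) * f y := by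
    have hfe : (fun y : ℂ => (stmt15G x y - L) * f y)
        = fun y : ℂ => stmt15G x y * f y - L * f y := by
      funext y
      ring
    rw [hfe, integral_sub (hGint x) (hf1.const_mul L), integral_const_mul, hI]
  have hg1abs : Integrable fun y : ℂ => |(stmt15G x y - L) * f y| := hg1int.abs
  have hin : (∫ y in Metric.closedBall (0:ℂ) (M:ℝ), |(stmt15G x y - L) * f y|) ≤ Cm * N := by
    calc (∫ y in Metric.closedBall (0:ℂ) (M:ℝ), |(stmt15G x y - L) * f y|)
        ≤ ∫ y in Metric.closedBall (0:ℂ) (M:ℝ), Cm * |f y| := by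
          refine setIntegral_mono_on hg1abs.integrableOn
            ((hf1.abs.const_mul Cm).integrableOn) measurableSet_closedBall fun y hy => ?_
          rw [abs_mul]
          refine mul_le_mul_of_nonneg_right ?_ (abs_nonneg _)
          exact stmt15_nearfield (Nat.cast_nonneg M) x y
            (by simpa [Metric.mem_closedBall, dist_zero_right] using hy) hxM
      _ ≤ ∫ y, Cm * |f y| := setIntegral_le_integral (hf1.abs.const_mul Cm)
          (Eventually.of_forall fun y => by positivity)
      _ = Cm * N := by rw [integral_const_mul, hN]
  have hout : (∫ y in (Metric.closedBall (0:ℂ) (M:ℝ))ᶜ, |(stmt15G x y - L) * f y|)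
      ≤ 3 * L * δ := by
    calc (∫ y in (Metric.closedBall (0:ℂ) (M:ℝ))ᶜ, |(stmt15G x y - L) * f y|)
        ≤ ∫ y in (Metric.closedBall (0:ℂ) (M:ℝ))ᶜ, (3 * L) * |f y| := by
          refine setIntegral_mono_on hg1abs.integrableOn
            ((hf1.abs.const_mul (3 * L)).integrableOn)
            measurableSet_closedBall.compl fun y _ => ?_
          rw [abs_mul]
          refine mul_le_mul_of_nonneg_right ?_ (abs_nonneg _)
          have h1 := stmt15_Gbound x y
          have h2 : Real.log (‖x‖ + 2) ≤ 2 * L := by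
            have h3 : Real.log (‖x‖ ^ 2) = 2 * Real.log ‖x‖ := by
              rw [Real.log_pow]
              norm_num
            rw [hL, ← h3]
            exact Real.log_le_log (by positivity) (by nlinarith)
          calc |stmt15G x y - L| ≤ |stmt15G x y| + |L| := abs_sub _ _
            _ ≤ Real.log (‖x‖ + 2) + L := add_le_add h1 (le_of_eq (abs_of_pos hLpos))
            _ ≤ 3 * L := by linarith
      _ = (3 * L) * ∫ y in (Metric.closedBall (0:ℂ) (M:ℝ))ᶜ, |f y| := integral_const_mul _ _
      _ ≤ 3 * L * δ := by
          refine mul_le_mul_of_nonneg_left hM.le (by positivity)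
  have hPhiLI : |Phi f x - L * I| ≤ Cm * N + 3 * L * δ + C.toReal := by
    rw [hPhi x]
    calc |(∫ y, stmt15G x y * f y) - (∫ y, stmt15hk x y * f y) - L * I|
        = |((∫ y, stmt15G x y * f y) - L * I) - ∫ y, stmt15hk x y * f y| := by ring_nf
      _ ≤ |(∫ y, stmt15G x y * f y) - L * I| + |∫ y, stmt15hk x y * f y| := abs_sub _ _
      _ ≤ (Cm * N + 3 * L * δ) + C.toReal := by
          refine add_le_add ?_ (hC₀ x)
          rw [hsum]
          calc |∫ y, (stmt15G x y - L) * f y| ≤ ∫ y, |(stmt15G x y - L) * f y| := by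
                have h := norm_integral_le_integral_norm (μ := volume)
                  fun y : ℂ => (stmt15G x y - L) * f y
                simp only [Real.norm_eq_abs] at h
                exact h
            _ = (∫ y in Metric.closedBall (0:ℂ) (M:ℝ), |(stmt15G x y - L) * f y|)
                  + ∫ y in (Metric.closedBall (0:ℂ) (M:ℝ))ᶜ, |(stmt15G x y - L) * f y| :=
                (integral_add_compl measurableSet_closedBall hg1abs).symm
            _ ≤ Cm * N + 3 * L * δ := add_le_add hin hout
  rw [Real.dist_eq]
  have h1 : Phi f x / L - I = (Phi f x - L * I) / L := by
    field_simp
  have key : |Phi f x / L - I| ≤ D / L + 3 * δ := by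
    rw [h1, abs_div, abs_of_pos hLpos, div_le_iff₀ hLpos]
    calc |Phi f x - L * I| ≤ Cm * N + 3 * L * δ + C.toReal := hPhiLI
      _ = (D / L + 3 * δ) * L := by
          field_simp
          ring
  have hDL : D / L ≤ ε / 3 := by
    rw [div_le_iff₀ hLpos]
    have h2 : 3 * (D + 1) ≤ L * ε := by
      have := (div_le_iff₀ hε).1 hLD
      linarith
    nlinarith
  calc |Phi f x / L - I| ≤ D / L + 3 * δ := key
    _ ≤ ε / 3 + 3 * (ε / 6) := by rw [hδdef] at *; linarith
    _ < ε := by linarith
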